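/- arXiv:math/0009170 — 2 statements merged into one kernel-verified Lean document; each statement's English description precedes it below -/
import Mathlib

section
/- Let C be a commutative star ring in which 2 is invertible, A a unital *-algebra over C, and qA = (A[[λ]], ⋆) a Hermitian formal deformation of A. Fix n ≥ 1 and consider M_n(A)[[λ]] = M_n(qA) with the deformed product ⋆ and the conjugate-transpose involution. If L_0 ∈ M_n(A) is invertible and S = Σ_{r≥0} S_r λ^r ∈ M_n(A)[[λ]] satisfies S* = S and S_0 = L_0* L_0, then there exist L_r ∈ M_n(A) for r ≥ 1 such that L = L_0 + Σ_{r≥1} L_r λ^r satisfies S = L* ⋆ L. -/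
open scoped Matrix

/-- Cauchy-type convolution of two formal series along a family of
coefficient maps `B r : M → N → P`:  `(x ⋆ y) n = ∑_{r+i+j=n} B r (x i) (y j)`. -/
def fdConv {M N P : Type*} [AddCommMonoid P] (B : ℕ → M → N → P)
    (x : ℕ → M) (y : ℕ → N) : ℕ → P := fun n =>
  ∑ p ∈ Finset.HasAntidiagonal.antidiagonal n, ∑ q ∈ Finset.HasAntidiagonal.antidiagonal p.2, B p.1 (x q.1) (y q.2)

/-- The unit formal series `1 + 0·λ + 0·λ² + ⋯`. -/
def fdOne (A : Type*) [One A] [Zero A] : ℕ → A := fun n => if n = 0 then 1 else 0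

/-- An element viewed as a constant (order-zero) formal series. -/
def fdC {A : Type*} [Zero A] (a : A) : ℕ → A := fun n => if n = 0 then a else 0

/-- Coefficientwise star of a formal series. -/
def fdStar {A : Type*} [Star A] (x : ℕ → A) : ℕ → A := fun n => star (x n)

/-- Action of a scalar series `c ∈ k[[λ]]` on series with coefficients in a `k`-module. -/
def fdSmul {k M : Type*} [Semiring k] [AddCommMonoid M] [Module k M]
    (c : ℕ → k) (x : ℕ → M) : ℕ → M := fun n =>
  ∑ p ∈ Finset.HasAntidiagonal.antidiagonal n, c p.1 • x p.2

/-- Order-by-order extension of a family of maps `T r : E → F` to formal series: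
`(T x) n = ∑_{r+j=n} T r (x j)`. -/
def fdMap {E F : Type*} [AddCommMonoid F] (T : ℕ → E → F) (x : ℕ → E) : ℕ → F :=
  fun n => ∑ p ∈ Finset.HasAntidiagonal.antidiagonal n, T p.1 (x p.2)

/-- A formal deformation (à la Gerstenhaber) of a unital `k`-algebra `A`:
a family of `k`-bilinear cochains `C r` with `C 0` the original product, whose
convolution product on `A[[λ]]` is associative and unital (with the same unit). -/
structure FormalDeformation (k A : Type*) [CommRing k] [Ring A] [Algebra k A] where
  C : ℕ → A →ₗ[k] A →ₗ[k] A
  C_zero : ∀ a b : A, C 0 a b = a * b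
  assoc : ∀ x y z : ℕ → A,
    fdConv (fun r a b => C r a b) (fdConv (fun r a b => C r a b) x y) z =
      fdConv (fun r a b => C r a b) x (fdConv (fun r a b => C r a b) y z)
  one_mul : ∀ x : ℕ → A, fdConv (fun r a b => C r a b) (fdOne A) x = x
  mul_one : ∀ x : ℕ → A, fdConv (fun r a b => C r a b) x (fdOne A) = x

namespace FormalDeformation

variable {k A : Type*} [CommRing k] [Ring A] [Algebra k A]

/-- The deformed product on `A[[λ]]`. -/
def mul (D : FormalDeformation k A) : (ℕ → A) → (ℕ → A) → ℕ → A :=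
  fdConv fun r a b => D.C r a b

/-- A deformation of a `*`-algebra is Hermitian if the coefficientwise extension of
the involution is still an involution for the deformed product. -/
def IsHermitian [StarRing A] (D : FormalDeformation k A) : Prop :=
  ∀ x y : ℕ → A, fdStar (D.mul x y) = D.mul (fdStar y) (fdStar x)

/-- The extension of the deformation cochains to matrices. -/
def matC (D : FormalDeformation k A) (n : ℕ) (r : ℕ)
    (L S : Matrix (Fin n) (Fin n) A) : Matrix (Fin n) (Fin n) A :=
  Matrix.of fun i j => ∑ s, D.C r (L i s) (S s j)

/-- The deformed product on `M_n(A)[[λ]] = M_n(A[[λ]])`. -/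
def matMul (D : FormalDeformation k A) (n : ℕ) :
    (ℕ → Matrix (Fin n) (Fin n) A) → (ℕ → Matrix (Fin n) (Fin n) A) →
      ℕ → Matrix (Fin n) (Fin n) A :=
  fdConv (D.matC n)

/-- The deformed left action of `M_n(A)[[λ]]` on column vectors `A^n[[λ]]`. -/
def mvMul (D : FormalDeformation k A) (n : ℕ) :
    (ℕ → Matrix (Fin n) (Fin n) A) → (ℕ → Fin n → A) → ℕ → Fin n → A :=
  fdConv fun r L v => fun i => ∑ j, D.C r (L i j) (v j)

/-- The deformed right action of `A[[λ]]` on column vectors `A^n[[λ]]`. -/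
def vsMul (D : FormalDeformation k A) (n : ℕ) :
    (ℕ → Fin n → A) → (ℕ → A) → ℕ → Fin n → A :=
  fdConv fun r v a => fun i => D.C r (v i) a

end FormalDeformation


section Aux

namespace FormalDeformation

variable {C A : Type*} [CommRing C] [Ring A] [Algebra C A]

theorem mul_fdC (D : FormalDeformation C A) (a b : A) (r : ℕ) :
    D.mul (fdC a) (fdC b) r = D.C r a b := by
  classical
  unfold FormalDeformation.mul fdConv
  rw [Finset.sum_eq_single ((r, 0) : ℕ × ℕ)]
  · rw [Finset.Nat.antidiagonal_zero, Finset.sum_singleton]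
    simp [fdC]
  · intro p hp hne
    rw [Finset.HasAntidiagonal.mem_antidiagonal] at hp
    apply Finset.sum_eq_zero
    intro q hq
    rw [Finset.HasAntidiagonal.mem_antidiagonal] at hq
    have h : q.1 ≠ 0 ∨ q.2 ≠ 0 := by
      by_contra hc
      push_neg at hc
      exact hne (Prod.ext (by omega) (by omega))
    rcases h with h | h
    · simp [fdC, h]
    · simp [fdC, h]
  · intro h
    exact absurd (Finset.HasAntidiagonal.mem_antidiagonal.mpr (by simp)) h

theorem fdStar_fdC [StarRing A] (a : A) : fdStar (fdC a) = fdC (star a) := by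
  funext m
  simp only [fdStar, fdC]
  split <;> simp

theorem star_C [StarRing A] (D : FormalDeformation C A) (hD : D.IsHermitian)
    (r : ℕ) (a b : A) : star (D.C r a b) = D.C r (star b) (star a) := by
  have h := congrFun (hD (fdC a) (fdC b)) r
  simp only [fdStar_fdC] at h
  rw [mul_fdC] at h
  rw [show fdStar (D.mul (fdC a) (fdC b)) r = star (D.mul (fdC a) (fdC b) r) from rfl,
    mul_fdC] at h
  exact h

variable {n : ℕ}

theorem matC_zero_left (D : FormalDeformation C A) (r : ℕ)
    (Q : Matrix (Fin n) (Fin n) A) : D.matC n r 0 Q = 0 := by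
  ext i j; simp [FormalDeformation.matC]

theorem matC_zero_right (D : FormalDeformation C A) (r : ℕ)
    (P : Matrix (Fin n) (Fin n) A) : D.matC n r P 0 = 0 := by
  ext i j; simp [FormalDeformation.matC]

theorem matC_zero (D : FormalDeformation C A) (P Q : Matrix (Fin n) (Fin n) A) :
    D.matC n 0 P Q = P * Q := by
  ext i j; simp [FormalDeformation.matC, D.C_zero, Matrix.mul_apply]

theorem matC_conjT [StarRing A] (D : FormalDeformation C A) (hD : D.IsHermitian)
    (r : ℕ) (P Q : Matrix (Fin n) (Fin n) A) :
    (D.matC n r P Q)ᴴ = D.matC n r Qᴴ Pᴴ := by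
  ext i j
  simp [FormalDeformation.matC, Matrix.conjTranspose_apply, star_sum, star_C D hD]

/-- Truncation of a series below order `m`. -/
def trunc {M : Type*} [Zero M] (L : ℕ → M) (m : ℕ) : ℕ → M :=
  fun j => if j < m then L j else 0

/-- The order-`m` coefficient of `(trunc L m)ᴴ ⋆ (trunc L m)`. -/
def Km [StarRing A] (D : FormalDeformation C A) (n : ℕ)
    (L : ℕ → Matrix (Fin n) (Fin n) A) (m : ℕ) : Matrix (Fin n) (Fin n) A :=
  fdConv (D.matC n) (fun j => (trunc L m j)ᴴ) (trunc L m) m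

theorem conv_sq_herm [StarRing A] (D : FormalDeformation C A) (hD : D.IsHermitian)
    (X : ℕ → Matrix (Fin n) (Fin n) A) (m : ℕ) :
    (fdConv (D.matC n) (fun j => (X j)ᴴ) X m)ᴴ =
      fdConv (D.matC n) (fun j => (X j)ᴴ) X m := by
  unfold fdConv
  rw [Matrix.conjTranspose_sum]
  refine Finset.sum_congr rfl fun p hp => ?_
  calc (∑ q ∈ Finset.HasAntidiagonal.antidiagonal p.2, D.matC n p.1 ((X q.1)ᴴ) (X q.2))ᴴ
      = ∑ q ∈ Finset.HasAntidiagonal.antidiagonal p.2, D.matC n p.1 ((X q.2)ᴴ) (X q.1) := by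
        rw [Matrix.conjTranspose_sum]
        refine Finset.sum_congr rfl fun q hq => ?_
        rw [matC_conjT D hD, Matrix.conjTranspose_conjTranspose]
    _ = ∑ q ∈ Finset.HasAntidiagonal.antidiagonal p.2, D.matC n p.1 ((X q.1)ᴴ) (X q.2) := by
        conv_rhs => rw [← Finset.HasAntidiagonal.map_swap_antidiagonal, Finset.sum_map]
        rfl

theorem conv_sq_coeff [StarRing A] (D : FormalDeformation C A)
    (L : ℕ → Matrix (Fin n) (Fin n) A) (m : ℕ) (hm : 1 ≤ m) :
    fdConv (D.matC n) (fun j => (L j)ᴴ) L m =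
      Km D n L m + (L m)ᴴ * L 0 + (L 0)ᴴ * L m := by
  classical
  have h0m : 0 < m := hm
  have key : (∑ p ∈ Finset.HasAntidiagonal.antidiagonal m, ∑ q ∈ Finset.HasAntidiagonal.antidiagonal p.2,
      (D.matC n p.1 ((L q.1)ᴴ) (L q.2)
        - D.matC n p.1 ((trunc L m q.1)ᴴ) (trunc L m q.2)))
      = (L m)ᴴ * L 0 + (L 0)ᴴ * L m := by
    rw [Finset.sum_eq_single (((0 : ℕ), m) : ℕ × ℕ)]
    · have h1 : ((m, 0) : ℕ × ℕ) ∈ Finset.HasAntidiagonal.antidiagonal m := by simp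
      rw [← Finset.add_sum_erase _ _ h1]
      have h2 : (((0 : ℕ), m) : ℕ × ℕ) ∈ (Finset.HasAntidiagonal.antidiagonal m).erase (m, 0) := by
        rw [Finset.mem_erase, Finset.HasAntidiagonal.mem_antidiagonal]
        refine ⟨?_, by simp⟩
        intro hEq
        rw [Prod.ext_iff] at hEq
        omega
      rw [← Finset.add_sum_erase _ _ h2]
      have hz : ∑ q ∈ ((Finset.HasAntidiagonal.antidiagonal m).erase (m, 0)).erase (0, m),
          (D.matC n (((0 : ℕ), m) : ℕ × ℕ).1 ((L q.1)ᴴ) (L q.2)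
            - D.matC n (((0 : ℕ), m) : ℕ × ℕ).1 ((trunc L m q.1)ᴴ) (trunc L m q.2)) = 0 := by
        apply Finset.sum_eq_zero
        intro q hq
        rw [Finset.mem_erase, Finset.mem_erase, Finset.HasAntidiagonal.mem_antidiagonal] at hq
        obtain ⟨hne1, hne2, hsum⟩ := hq
        have hq1 : q.1 < m := by
          rcases Nat.lt_or_ge q.1 m with h | h
          · exact h
          · exact absurd (Prod.ext (by omega) (by omega)) hne2
        have hq2 : q.2 < m := by
          rcases Nat.lt_or_ge q.2 m with h | h
          · exact h
          · exact absurd (Prod.ext (by omega) (by omega)) hne1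
        simp [trunc, hq1, hq2]
      rw [hz]
      simp [trunc, h0m, matC_zero, matC_zero_left, matC_zero_right]
    · intro p hp hne
      rw [Finset.HasAntidiagonal.mem_antidiagonal] at hp
      apply Finset.sum_eq_zero
      intro q hq
      rw [Finset.HasAntidiagonal.mem_antidiagonal] at hq
      have hp2 : p.2 < m := by
        rcases Nat.lt_or_ge p.2 m with h | h
        · exact h
        · exact absurd (Prod.ext (by omega) (by omega)) hne
      have hq1 : q.1 < m := by omega
      have hq2 : q.2 < m := by omega
      simp [trunc, hq1, hq2]
    · intro h
      exact absurd (Finset.HasAntidiagonal.mem_antidiagonal.mpr (by simp)) h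
  have expand : fdConv (D.matC n) (fun j => (L j)ᴴ) L m - Km D n L m
      = (L m)ᴴ * L 0 + (L 0)ᴴ * L m := by
    rw [← key]
    unfold Km fdConv
    rw [← Finset.sum_sub_distrib]
    exact Finset.sum_congr rfl fun p hp => (Finset.sum_sub_distrib _ _).symm
  rw [sub_eq_iff_eq_add] at expand
  rw [expand]
  abel

/-- Order-by-order construction of the square root series. -/
noncomputable def buildL [StarRing A] (D : FormalDeformation C A) (n : ℕ) (h2 : C)
    (Minv L₀ : Matrix (Fin n) (Fin n) A) (S : ℕ → Matrix (Fin n) (Fin n) A) :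
    ℕ → Matrix (Fin n) (Fin n) A
  | 0 => L₀
  | (m + 1) =>
    h2 • (Minv * (S (m + 1) -
      ∑ p ∈ Finset.HasAntidiagonal.antidiagonal (m + 1), ∑ q ∈ Finset.HasAntidiagonal.antidiagonal p.2,
        D.matC n p.1
          ((if _ : q.1 < m + 1 then buildL D n h2 Minv L₀ S q.1 else 0)ᴴ)
          (if _ : q.2 < m + 1 then buildL D n h2 Minv L₀ S q.2 else 0)))
  termination_by m => m

theorem buildL_zero [StarRing A] (D : FormalDeformation C A) (n : ℕ) (h2 : C)
    (Minv L₀ : Matrix (Fin n) (Fin n) A) (S : ℕ → Matrix (Fin n) (Fin n) A) :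
    buildL D n h2 Minv L₀ S 0 = L₀ := by
  rw [buildL]

theorem buildL_succ [StarRing A] (D : FormalDeformation C A) (n : ℕ) (h2 : C)
    (Minv L₀ : Matrix (Fin n) (Fin n) A) (S : ℕ → Matrix (Fin n) (Fin n) A) (m : ℕ) :
    buildL D n h2 Minv L₀ S (m + 1) =
      h2 • (Minv * (S (m + 1) - Km D n (buildL D n h2 Minv L₀ S) (m + 1))) := by
  rw [buildL]
  have : (∑ p ∈ Finset.HasAntidiagonal.antidiagonal (m + 1), ∑ q ∈ Finset.HasAntidiagonal.antidiagonal p.2,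
      D.matC n p.1
        ((if _ : q.1 < m + 1 then buildL D n h2 Minv L₀ S q.1 else 0)ᴴ)
        (if _ : q.2 < m + 1 then buildL D n h2 Minv L₀ S q.2 else 0))
      = Km D n (buildL D n h2 Minv L₀ S) (m + 1) := by
    unfold Km fdConv trunc
    refine Finset.sum_congr rfl fun p hp => Finset.sum_congr rfl fun q hq => ?_
    simp only [dite_eq_ite, apply_ite (Matrix.conjTranspose), Matrix.conjTranspose_zero]
  rw [this]

end FormalDeformation

end Aux

/-- Lemma 2.2, "TrickLem". If `S` is a Hermitian formal series of
matrices whose zeroth coefficient is `L₀ᴴ * L₀` with `L₀` invertible, then `S` factors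
as `S = Lᴴ ⋆ L` for some deformation `L` of `L₀`. -/
theorem hermitian_square_root_deformation {C A : Type*} [CommRing C] [StarRing C]
    [Invertible (2 : C)] [Ring A] [Algebra C A] [StarRing A] [StarModule C A]
    (D : FormalDeformation C A) (hD : D.IsHermitian)
    (n : ℕ) (hn : 1 ≤ n)
    (L₀ : Matrix (Fin n) (Fin n) A) (hL₀ : IsUnit L₀)
    (S : ℕ → Matrix (Fin n) (Fin n) A)
    (hSherm : ∀ m, (S m)ᴴ = S m)
    (hS0 : S 0 = L₀ᴴ * L₀) :
    ∃ L : ℕ → Matrix (Fin n) (Fin n) A,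
      L 0 = L₀ ∧ S = D.matMul n (fun m => (L m)ᴴ) L := by
  classical
  obtain ⟨U, hU⟩ := hL₀
  have hstar2 : star (⅟(2:C)) = ⅟(2:C) := by
    have h : (2:C) * star (⅟(2:C)) = 1 := by
      have h' := congrArg star (invOf_mul_self (2:C))
      rw [star_mul, star_one] at h'
      rwa [show star (2:C) = 2 by
        rw [show (2:C) = 1 + 1 by norm_num, star_add, star_one]] at h'
    exact (invOf_eq_right_inv h).symm
  set h2 : C := ⅟(2:C) with hh2
  set Minv : Matrix (Fin n) (Fin n) A := (Units.val U⁻¹)ᴴ with hMinv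
  set L : ℕ → Matrix (Fin n) (Fin n) A :=
    FormalDeformation.buildL D n h2 Minv L₀ S with hLdef
  have hL0 : L 0 = L₀ := FormalDeformation.buildL_zero D n h2 Minv L₀ S
  have hUL : Units.val U⁻¹ * L₀ = 1 := by
    rw [← hU]; exact U.inv_mul
  have hinv1 : L₀ᴴ * Minv = 1 := by
    rw [hMinv, ← Matrix.conjTranspose_mul, hUL, Matrix.conjTranspose_one]
  refine ⟨L, hL0, ?_⟩
  funext m
  cases m with
  | zero =>
    show S 0 = fdConv (D.matC n) (fun j => (L j)ᴴ) L 0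
    simp only [fdConv, Finset.Nat.antidiagonal_zero, Finset.sum_singleton]
    rw [FormalDeformation.matC_zero, hL0, hS0]
  | succ m =>
    show S (m + 1) = fdConv (D.matC n) (fun j => (L j)ᴴ) L (m + 1)
    rw [FormalDeformation.conv_sq_coeff D L (m + 1) (by omega)]
    set K : Matrix (Fin n) (Fin n) A := FormalDeformation.Km D n L (m + 1) with hK
    set R : Matrix (Fin n) (Fin n) A := S (m + 1) - K with hR
    have hKherm : Kᴴ = K :=
      FormalDeformation.conv_sq_herm D hD (FormalDeformation.trunc L (m + 1)) (m + 1)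
    have hRherm : Rᴴ = R := by
      rw [hR, Matrix.conjTranspose_sub, hSherm, hKherm]
    have hLsucc : L (m + 1) = h2 • (Minv * R) :=
      FormalDeformation.buildL_succ D n h2 Minv L₀ S m
    have e1 : L₀ᴴ * L (m + 1) = h2 • R := by
      rw [hLsucc, Matrix.mul_smul, ← Matrix.mul_assoc, hinv1, Matrix.one_mul]
    have e2 : (L (m + 1))ᴴ * L₀ = h2 • R := by
      rw [hLsucc, Matrix.conjTranspose_smul, hstar2, Matrix.conjTranspose_mul,
        hMinv, Matrix.conjTranspose_conjTranspose, hRherm, Matrix.smul_mul,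
        Matrix.mul_assoc, hUL, Matrix.mul_one]
    rw [hL0, e1, e2]
    have h22 : h2 • R + h2 • R = R := by
      rw [← add_smul, ← two_mul, hh2, mul_invOf_self, one_smul]
    rw [add_assoc, h22, hR]
    abel
end

section
/- Let k be a commutative unital ring, A a unital k-algebra, qA = (A[[λ]], ⋆) a formal deformation of A, and E a finitely generated projective right A-module with action x·a. Then there exists a deformation of E corresponding to qA: k-bilinear maps R_r : E × A → E for r ≥ 1 such that the k[[λ]]-bilinear extension of x • a := x·a + Σ_{r≥1} R_r(x,a) λ^r makes the k[[λ]]-module E[[λ]] into a unital right module over qA, and this qA-module (E[[λ]], •) is finitely generated and projective over qA. -/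
open scoped Matrix

/-! ### Auxiliary sum lemmas -/

section SumLemmas

open Finset

variable {M N : Type*} [AddCommMonoid M] [AddCommGroup N]

lemma addhom_sum {φ : M → N} (h : ∀ x y, φ (x + y) = φ x + φ y)
    {ι : Type*} (s : Finset ι) (f : ι → M) :
    φ (∑ i ∈ s, f i) = ∑ i ∈ s, φ (f i) :=
  map_sum (AddMonoidHom.mk' φ h) f s

lemma addhom_zero {φ : M → N} (h : ∀ x y, φ (x + y) = φ x + φ y) : φ 0 = 0 :=
  map_zero (AddMonoidHom.mk' φ h)

lemma fd_assoc3 (n : ℕ) (g : ℕ → ℕ → ℕ → M) :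
    ∑ p ∈ antidiagonal n, ∑ q ∈ antidiagonal p.2, g p.1 q.1 q.2
      = ∑ p ∈ antidiagonal n, ∑ q ∈ antidiagonal p.1, g q.1 q.2 p.2 := by
  rw [Finset.sum_sigma', Finset.sum_sigma']
  refine Finset.sum_nbij' (fun x => ⟨(x.1.1 + x.2.1, x.2.2), (x.1.1, x.2.1)⟩)
    (fun x => ⟨(x.2.1, x.2.2 + x.1.2), (x.2.2, x.1.2)⟩) ?_ ?_ ?_ ?_ ?_
  · rintro ⟨⟨a, b⟩, ⟨c, d⟩⟩ h
    simp only [Finset.mem_sigma, Finset.HasAntidiagonal.mem_antidiagonal] at h ⊢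
    exact ⟨by omega, trivial⟩
  · rintro ⟨⟨a, b⟩, ⟨c, d⟩⟩ h
    simp only [Finset.mem_sigma, Finset.HasAntidiagonal.mem_antidiagonal] at h ⊢
    exact ⟨by omega, trivial⟩
  · rintro ⟨⟨a, b⟩, ⟨c, d⟩⟩ h
    simp only [Finset.mem_sigma, Finset.HasAntidiagonal.mem_antidiagonal] at h
    obtain ⟨h1, h2⟩ := h; subst h2; rfl
  · rintro ⟨⟨a, b⟩, ⟨c, d⟩⟩ h
    simp only [Finset.mem_sigma, Finset.HasAntidiagonal.mem_antidiagonal] at h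
    obtain ⟨h1, h2⟩ := h; subst h2; rfl
  · rintro ⟨⟨a, b⟩, ⟨c, d⟩⟩ h
    rfl

end SumLemmas

/-! ### Generic composition lemmas for `fdMap` and `fdConv` -/

section CompLemmas

open Finset

set_option linter.unusedSectionVars false

variable {E F G H : Type*} [AddCommGroup E] [AddCommGroup F] [AddCommGroup G]
  [AddCommGroup H]

lemma fdMap_fdMap (U : ℕ → F → G) (V : ℕ → E → F)
    (hU : ∀ r x y, U r (x + y) = U r x + U r y) (x : ℕ → E) :
    fdMap U (fdMap V x) =
      fdMap (fun d w => ∑ p ∈ antidiagonal d, U p.1 (V p.2 w)) x := by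
  funext n
  show (∑ p ∈ antidiagonal n, U p.1 (∑ q ∈ antidiagonal p.2, V q.1 (x q.2))) = _
  have : ∀ p ∈ antidiagonal n,
      U p.1 (∑ q ∈ antidiagonal p.2, V q.1 (x q.2))
        = ∑ q ∈ antidiagonal p.2, U p.1 (V q.1 (x q.2)) := fun p _ =>
    addhom_sum (hU p.1) _ _
  rw [Finset.sum_congr rfl this, fd_assoc3 n (fun r a b => U r (V a (x b)))]
  show _ = ∑ p ∈ antidiagonal n, ∑ q ∈ antidiagonal p.1, U q.1 (V q.2 (x p.2))
  rfl

lemma fdMap_fdConv (U : ℕ → G → H) (B : ℕ → E → F → G)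
    (hU : ∀ r x y, U r (x + y) = U r x + U r y) (x : ℕ → E) (y : ℕ → F) :
    fdMap U (fdConv B x y) =
      fdConv (fun d w b => ∑ p ∈ antidiagonal d, U p.1 (B p.2 w b)) x y := by
  funext n
  show (∑ p ∈ antidiagonal n,
      U p.1 (∑ q ∈ antidiagonal p.2, ∑ v ∈ antidiagonal q.2, B q.1 (x v.1) (y v.2))) = _
  have : ∀ p ∈ antidiagonal n,
      U p.1 (∑ q ∈ antidiagonal p.2, ∑ v ∈ antidiagonal q.2, B q.1 (x v.1) (y v.2))
        = ∑ q ∈ antidiagonal p.2, ∑ v ∈ antidiagonal q.2, U p.1 (B q.1 (x v.1) (y v.2)) := by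
    intro p _
    rw [addhom_sum (hU p.1)]
    exact Finset.sum_congr rfl fun q _ => addhom_sum (hU p.1) _ _
  rw [Finset.sum_congr rfl this,
    fd_assoc3 n (fun d r z => ∑ v ∈ antidiagonal z, U d (B r (x v.1) (y v.2)))]
  show _ = ∑ p ∈ antidiagonal n, ∑ q ∈ antidiagonal p.2,
      ∑ u ∈ antidiagonal p.1, U u.1 (B u.2 (x q.1) (y q.2))
  rw [Finset.sum_congr rfl fun p _ => Finset.sum_comm]

lemma fdMap_add (U : ℕ → E → F) (hU : ∀ r x y, U r (x + y) = U r x + U r y)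
    (x y : ℕ → E) : fdMap U (x + y) = fdMap U x + fdMap U y := by
  funext n
  show (∑ p ∈ antidiagonal n, U p.1 (x p.2 + y p.2)) = _
  simp only [hU, Finset.sum_add_distrib]
  rfl

lemma fdConv_fdMap_left (B : ℕ → F → G → H) (V : ℕ → E → F)
    (hB : ∀ r x y b, B r (x + y) b = B r x b + B r y b) (x : ℕ → E) (y : ℕ → G) :
    fdConv B (fdMap V x) y =
      fdConv (fun d w b => ∑ p ∈ antidiagonal d, B p.1 (V p.2 w) b) x y := by
  funext n
  show (∑ p ∈ antidiagonal n, ∑ q ∈ antidiagonal p.2,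
      B p.1 (∑ u ∈ antidiagonal q.1, V u.1 (x u.2)) (y q.2)) = _
  have : ∀ p ∈ antidiagonal n,
      (∑ q ∈ antidiagonal p.2,
        B p.1 (∑ u ∈ antidiagonal q.1, V u.1 (x u.2)) (y q.2))
      = ∑ q ∈ antidiagonal p.2, ∑ v ∈ antidiagonal q.2,
          B p.1 (V q.1 (x v.1)) (y v.2) := by
    intro p _
    have h1 : ∀ q ∈ antidiagonal p.2,
        B p.1 (∑ u ∈ antidiagonal q.1, V u.1 (x u.2)) (y q.2)
          = ∑ u ∈ antidiagonal q.1, B p.1 (V u.1 (x u.2)) (y q.2) := fun q _ =>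
      addhom_sum (φ := fun w => B p.1 w (y q.2)) (fun u v => hB p.1 u v _) _ _
    rw [Finset.sum_congr rfl h1]
    exact (fd_assoc3 p.2 (fun a b c => B p.1 (V a (x b)) (y c))).symm
  rw [Finset.sum_congr rfl this,
    fd_assoc3 n (fun r a z => ∑ v ∈ antidiagonal z, B r (V a (x v.1)) (y v.2))]
  show _ = ∑ p ∈ antidiagonal n, ∑ q ∈ antidiagonal p.2,
      ∑ u ∈ antidiagonal p.1, B u.1 (V u.2 (x q.1)) (y q.2)
  rw [Finset.sum_congr rfl fun p _ => Finset.sum_comm]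

end CompLemmas

/-! ### The deformed algebra as a ring -/

section SerRing

open Finset

variable {k A : Type*} [CommRing k] [Ring A] [Algebra k A]

/-- Type synonym for `ℕ → A` carrying the deformed ring structure. -/
def SerD (_D : FormalDeformation k A) : Type _ := ℕ → A

namespace SerD

variable {D : FormalDeformation k A}

instance : AddCommGroup (SerD D) := inferInstanceAs (AddCommGroup (ℕ → A))

instance : Ring (SerD D) where
  __ := (inferInstance : AddCommGroup (SerD D))
  mul := D.mul
  one := fdOne A
  mul_assoc := D.assoc
  one_mul := D.one_mul
  mul_one := D.mul_one
  left_distrib x y z := by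
    funext n
    show ∑ p ∈ antidiagonal n, ∑ q ∈ antidiagonal p.2,
        (D.C p.1 (x q.1)) (y q.2 + z q.2)
      = (∑ p ∈ antidiagonal n, ∑ q ∈ antidiagonal p.2, (D.C p.1 (x q.1)) (y q.2))
        + ∑ p ∈ antidiagonal n, ∑ q ∈ antidiagonal p.2, (D.C p.1 (x q.1)) (z q.2)
    simp only [map_add, Finset.sum_add_distrib]
  right_distrib x y z := by
    funext n
    show ∑ p ∈ antidiagonal n, ∑ q ∈ antidiagonal p.2,
        (D.C p.1 (x q.1 + y q.1)) (z q.2)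
      = (∑ p ∈ antidiagonal n, ∑ q ∈ antidiagonal p.2, (D.C p.1 (x q.1)) (z q.2))
        + ∑ p ∈ antidiagonal n, ∑ q ∈ antidiagonal p.2, (D.C p.1 (y q.1)) (z q.2)
    simp only [map_add, LinearMap.add_apply, Finset.sum_add_distrib]
  zero_mul x := by
    funext n
    show ∑ p ∈ antidiagonal n, ∑ q ∈ antidiagonal p.2,
        (D.C p.1 ((0 : ℕ → A) q.1)) (x q.2) = 0
    simp
  mul_zero x := by
    funext n
    show ∑ p ∈ antidiagonal n, ∑ q ∈ antidiagonal p.2,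
        (D.C p.1 (x q.1)) ((0 : ℕ → A) q.2) = 0
    simp

lemma mul_def (x y : SerD D) : x * y = D.mul x y := rfl

lemma mul_apply (x y : SerD D) (n : ℕ) :
    (x * y) n = ∑ p ∈ antidiagonal n, ∑ q ∈ antidiagonal p.2,
      D.C p.1 (x q.1) (y q.2) := rfl

lemma one_apply (n : ℕ) : (1 : SerD D) n = if n = 0 then 1 else 0 := rfl

lemma mul_apply_zero (x y : SerD D) : (x * y) 0 = x 0 * y 0 := by
  rw [mul_apply]
  simp [Finset.Nat.antidiagonal_zero, D.C_zero]

/-- Truncation: the `n`-th coefficient of a product only depends on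
coefficients up to `n`. -/
lemma mul_apply_congr {x x' y y' : SerD D} {n : ℕ}
    (hx : ∀ l ≤ n, x l = x' l) (hy : ∀ l ≤ n, y l = y' l) :
    (x * y) n = (x' * y') n := by
  rw [mul_apply, mul_apply]
  refine Finset.sum_congr rfl fun p hp => Finset.sum_congr rfl fun q hq => ?_
  rw [Finset.HasAntidiagonal.mem_antidiagonal] at hp hq
  rw [hx q.1 (by omega), hy q.2 (by omega)]

/-- Vanishing orders add under multiplication. -/
lemma mul_vanish {x y : SerD D} {a b : ℕ}
    (hx : ∀ l < a, x l = 0) (hy : ∀ l < b, y l = 0) :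
    ∀ n < a + b, (x * y) n = 0 := by
  intro n hn
  rw [mul_apply]
  refine Finset.sum_eq_zero fun p hp => Finset.sum_eq_zero fun q hq => ?_
  rw [Finset.HasAntidiagonal.mem_antidiagonal] at hp hq
  rcases lt_or_ge q.1 a with h | h
  · rw [hx q.1 h]; simp
  · rw [hy q.2 (by omega)]; simp

end SerD

end SerRing

/-! ### Two polynomial identities in an arbitrary ring -/

section RingIds

lemma ringid1 {R : Type*} [Ring R] (X : R) :
    (3 * X ^ 2 - 2 * X ^ 3) - X = (X ^ 2 - X) * (1 - 2 * X) := by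
  have h : (3 * (Polynomial.X : Polynomial ℤ) ^ 2 - 2 * Polynomial.X ^ 3) - Polynomial.X
      = (Polynomial.X ^ 2 - Polynomial.X) * (1 - 2 * Polynomial.X) := by ring
  have := congrArg (Polynomial.aeval X) h
  simpa [map_ofNat] using this

lemma ringid2 {R : Type*} [Ring R] (X : R) :
    (3 * X ^ 2 - 2 * X ^ 3) ^ 2 - (3 * X ^ 2 - 2 * X ^ 3)
      = (X ^ 2 - X) * ((X ^ 2 - X) * ((1 - 2 * X) ^ 2 - 4)) := by
  have h : (3 * (Polynomial.X : Polynomial ℤ) ^ 2 - 2 * Polynomial.X ^ 3) ^ 2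
        - (3 * Polynomial.X ^ 2 - 2 * Polynomial.X ^ 3)
      = (Polynomial.X ^ 2 - Polynomial.X) *
        ((Polynomial.X ^ 2 - Polynomial.X) * ((1 - 2 * Polynomial.X) ^ 2 - 4)) := by ring
  have := congrArg (Polynomial.aeval X) h
  simpa [map_ofNat] using this

end RingIds

/-! ### Matrices of deformed series: order filtration -/

section MatOrd

open Finset

variable {k A : Type*} [CommRing k] [Ring A] [Algebra k A] {D : FormalDeformation k A}
  {m : ℕ}

/-- Evaluation of a deformed series at a coefficient, as an additive map. -/
def SerD.ev (D : FormalDeformation k A) (n : ℕ) : SerD D →+ A :=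
  AddMonoidHom.mk' (fun x => x n) fun _ _ => rfl

lemma SerD.sum_apply {ι : Type*} (s : Finset ι) (v : ι → SerD D) (n : ℕ) :
    (∑ i ∈ s, v i) n = ∑ i ∈ s, v i n :=
  map_sum (SerD.ev D n) v s

/-- Evaluation at the zeroth coefficient, as a ring hom. -/
def SerD.ev0 (D : FormalDeformation k A) : SerD D →+* A where
  toFun x := x 0
  map_one' := rfl
  map_mul' x y := SerD.mul_apply_zero x y
  map_zero' := rfl
  map_add' _ _ := rfl

/-- `X` vanishes to order `p` (coefficientwise). -/
def mvord (p : ℕ) (X : Matrix (Fin m) (Fin m) (SerD D)) : Prop :=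
  ∀ i j n, n < p → X i j n = 0

lemma mvord_zero (X : Matrix (Fin m) (Fin m) (SerD D)) : mvord 0 X :=
  fun _ _ _ h => absurd h (Nat.not_lt_zero _)

lemma mvord_mul {a b : ℕ} {X Y : Matrix (Fin m) (Fin m) (SerD D)}
    (hX : mvord a X) (hY : mvord b Y) : mvord (a + b) (X * Y) := by
  intro i j n hn
  rw [Matrix.mul_apply, SerD.sum_apply]
  exact Finset.sum_eq_zero fun s _ =>
    SerD.mul_vanish (fun l hl => hX i s l hl) (fun l hl => hY s j l hl) n hn

lemma mvord_mul_right {a : ℕ} {X Y : Matrix (Fin m) (Fin m) (SerD D)}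
    (hX : mvord a X) : mvord a (X * Y) := by
  simpa using mvord_mul hX (mvord_zero Y)

end MatOrd

/-! ### The setup, the classical idempotent and its deformation -/

structure FDSetup (k A E : Type*) [CommRing k] [Ring A] [Algebra k A]
    [AddCommGroup E] [Module k E] where
  D : FormalDeformation k A
  ract : E → A → E
  ract_add_left : ∀ x y a, ract (x + y) a = ract x a + ract y a
  ract_add_right : ∀ x a b, ract x (a + b) = ract x a + ract x b
  ract_smul_left : ∀ (c : k) x a, ract (c • x) a = c • ract x a
  ract_smul_right : ∀ (c : k) x a, ract x (c • a) = c • ract x a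
  ract_one : ∀ x, ract x 1 = x
  ract_mul : ∀ x a b, ract x (a * b) = ract (ract x a) b
  m : ℕ
  ξ : Fin m → E
  f : Fin m → E → A
  f_add : ∀ i x y, f i (x + y) = f i x + f i y
  f_lin : ∀ i x a, f i (ract x a) = f i x * a
  f_dual : ∀ x, ∑ i, ract (ξ i) (f i x) = x

namespace FDSetup

open Finset

variable {k A E : Type*} [CommRing k] [Ring A] [Algebra k A]
  [AddCommGroup E] [Module k E] (S : FDSetup k A E)

lemma ract_zero (x : E) : S.ract x 0 = 0 :=
  addhom_zero (S.ract_add_right x)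

lemma ract_sum {ι : Type*} (x : E) (s : Finset ι) (g : ι → A) :
    S.ract x (∑ i ∈ s, g i) = ∑ i ∈ s, S.ract x (g i) :=
  addhom_sum (S.ract_add_right x) s g

lemma ract_sum_left {ι : Type*} (a : A) (s : Finset ι) (g : ι → E) :
    S.ract (∑ i ∈ s, g i) a = ∑ i ∈ s, S.ract (g i) a :=
  addhom_sum (φ := fun x => S.ract x a) (fun u v => S.ract_add_left u v a) s g

lemma f_zero (i : Fin S.m) : S.f i 0 = 0 :=
  addhom_zero (S.f_add i)

lemma f_sum {ι : Type*} (i : Fin S.m) (s : Finset ι) (g : ι → E) :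
    S.f i (∑ j ∈ s, g j) = ∑ j ∈ s, S.f i (g j) :=
  addhom_sum (S.f_add i) s g

lemma f_smul (i : Fin S.m) (c : k) (x : E) : S.f i (c • x) = c • S.f i x := by
  have h1 : c • x = S.ract x (c • 1) := by
    rw [S.ract_smul_right, S.ract_one]
  rw [h1, S.f_lin, mul_smul_comm, mul_one]

/-- The classical idempotent associated with the dual basis. -/
def e : Matrix (Fin S.m) (Fin S.m) A :=
  Matrix.of fun i j => S.f i (S.ξ j)

lemma e_idem : S.e * S.e = S.e := by
  ext i j
  rw [Matrix.mul_apply]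
  show (∑ s, S.f i (S.ξ s) * S.f s (S.ξ j)) = S.f i (S.ξ j)
  calc (∑ s, S.f i (S.ξ s) * S.f s (S.ξ j))
      = ∑ s, S.f i (S.ract (S.ξ s) (S.f s (S.ξ j))) := by
        simp [S.f_lin]
    _ = S.f i (∑ s, S.ract (S.ξ s) (S.f s (S.ξ j))) := (S.f_sum i _ _).symm
    _ = S.f i (S.ξ j) := by rw [S.f_dual]

/-- The recursive idempotent lift. -/
def liftSeq : ℕ → Matrix (Fin S.m) (Fin S.m) (SerD S.D)
  | 0 => Matrix.of fun i j => (fdC (S.e i j) : SerD S.D)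
  | N + 1 => 3 * (liftSeq N) ^ 2 - 2 * (liftSeq N) ^ 3

lemma liftSeq_coeff0 (N : ℕ) :
    (SerD.ev0 S.D).mapMatrix (S.liftSeq N) = S.e := by
  induction N with
  | zero =>
    ext i j
    show (fdC (S.e i j) : SerD S.D) 0 = S.e i j
    simp [fdC]
  | succ N ih =>
    show (SerD.ev0 S.D).mapMatrix (3 * (S.liftSeq N) ^ 2 - 2 * (S.liftSeq N) ^ 3) = S.e
    rw [map_sub, map_mul, map_mul, map_pow, map_pow, ih, map_ofNat, map_ofNat]
    have h2 : S.e ^ 2 = S.e := by rw [sq, S.e_idem]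
    have h3 : S.e ^ 3 = S.e := by rw [pow_succ, h2, S.e_idem]
    rw [h2, h3, ← sub_mul]
    norm_num

lemma liftSeq_defect (N : ℕ) :
    mvord (2 ^ N) ((S.liftSeq N) ^ 2 - S.liftSeq N) := by
  induction N with
  | zero =>
    intro i j n hn
    interval_cases n
    have h : ((S.liftSeq 0) ^ 2 - S.liftSeq 0) i j 0
        = ((SerD.ev0 S.D).mapMatrix ((S.liftSeq 0) ^ 2 - S.liftSeq 0)) i j := rfl
    rw [h, map_sub, map_pow, S.liftSeq_coeff0, sq, S.e_idem, sub_self]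
    rfl
  | succ N ih =>
    have key : (S.liftSeq (N + 1)) ^ 2 - S.liftSeq (N + 1)
        = ((S.liftSeq N) ^ 2 - S.liftSeq N) *
            (((S.liftSeq N) ^ 2 - S.liftSeq N) * ((1 - 2 * S.liftSeq N) ^ 2 - 4)) := by
      show (3 * (S.liftSeq N) ^ 2 - 2 * (S.liftSeq N) ^ 3) ^ 2
          - (3 * (S.liftSeq N) ^ 2 - 2 * (S.liftSeq N) ^ 3) = _
      exact ringid2 _
    rw [key]
    have : (2 : ℕ) ^ (N + 1) = 2 ^ N + 2 ^ N := by rw [pow_succ]; omega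
    rw [this]
    exact mvord_mul ih (mvord_mul_right ih)

lemma liftSeq_stab (N : ℕ) :
    mvord (2 ^ N) (S.liftSeq (N + 1) - S.liftSeq N) := by
  have key : S.liftSeq (N + 1) - S.liftSeq N
      = ((S.liftSeq N) ^ 2 - S.liftSeq N) * (1 - 2 * S.liftSeq N) := by
    show (3 * (S.liftSeq N) ^ 2 - 2 * (S.liftSeq N) ^ 3) - S.liftSeq N = _
    exact ringid1 _
  rw [key]
  exact mvord_mul_right (S.liftSeq_defect N)

lemma liftSeq_agree {N M : ℕ} (h : N ≤ M) {n : ℕ} (hn : n < 2 ^ N) (i j : Fin S.m) :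
    S.liftSeq M i j n = S.liftSeq N i j n := by
  induction M, h using Nat.le_induction with
  | base => rfl
  | succ M hM ih =>
    have h0 : (S.liftSeq (M + 1) - S.liftSeq M) i j n = 0 :=
      S.liftSeq_stab M i j n (lt_of_lt_of_le hn (Nat.pow_le_pow_right (by norm_num) hM))
    have h1 : S.liftSeq (M + 1) i j n - S.liftSeq M i j n = 0 := h0
    have := sub_eq_zero.mp h1
    rw [this, ih]

/-- The deformed idempotent. -/
def ehat : Matrix (Fin S.m) (Fin S.m) (SerD S.D) :=
  Matrix.of fun i j => (fun n => S.liftSeq n i j n : SerD S.D)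

lemma ehat_coeff {N n : ℕ} (hn : n < 2 ^ N) (i j : Fin S.m) :
    S.ehat i j n = S.liftSeq N i j n := by
  show S.liftSeq n i j n = S.liftSeq N i j n
  rcases le_total N n with h | h
  · exact S.liftSeq_agree h hn i j
  · exact (S.liftSeq_agree h (Nat.lt_two_pow_self (n := n)) i j).symm

lemma ehat_coeff0 (i j : Fin S.m) : S.ehat i j 0 = S.e i j := by
  have : S.ehat i j 0 = S.liftSeq 0 i j 0 := S.ehat_coeff (N := 0) (by norm_num) i j
  rw [this]
  show (fdC (S.e i j) : SerD S.D) 0 = S.e i j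
  simp [fdC]

lemma ehat_idem : S.ehat * S.ehat = S.ehat := by
  ext i j
  funext n
  have key : ∀ s t : Fin S.m, ∀ l ≤ n, S.ehat s t l = S.liftSeq n s t l := fun s t l hl =>
    S.ehat_coeff (lt_of_le_of_lt hl (Nat.lt_two_pow_self (n := n))) s t
  have h1 : (S.ehat * S.ehat) i j n = (S.liftSeq n * S.liftSeq n) i j n := by
    rw [Matrix.mul_apply, Matrix.mul_apply, SerD.sum_apply, SerD.sum_apply]
    exact Finset.sum_congr rfl fun s _ =>
      SerD.mul_apply_congr (key i s) (key s j)
  have h2 : (S.liftSeq n * S.liftSeq n) i j n = S.liftSeq n i j n := by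
    have hd := S.liftSeq_defect n i j n (Nat.lt_two_pow_self (n := n))
    have : ((S.liftSeq n) ^ 2 - S.liftSeq n) i j n
        = (S.liftSeq n * S.liftSeq n) i j n - S.liftSeq n i j n := by
      rw [sq]; rfl
    rw [this] at hd
    exact sub_eq_zero.mp hd
  rw [h1, h2]
  exact (key i j n le_rfl).symm

end FDSetup

/-! ### More sum shuffles -/

section SumLemmas2

open Finset

variable {M : Type*} [AddCommMonoid M]

lemma fd_sum4 (n : ℕ) (g : ℕ → ℕ → ℕ → ℕ → M) :
    (∑ p ∈ antidiagonal n, ∑ q ∈ antidiagonal p.2, ∑ u ∈ antidiagonal q.1,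
        g p.1 u.1 u.2 q.2)
      = ∑ p ∈ antidiagonal n, ∑ q ∈ antidiagonal p.2, ∑ u ∈ antidiagonal p.1,
          g u.1 u.2 q.1 q.2 := by
  have h1 : ∀ r w, (∑ q ∈ antidiagonal w, ∑ u ∈ antidiagonal q.1, g r u.1 u.2 q.2)
      = ∑ q ∈ antidiagonal w, ∑ u ∈ antidiagonal q.2, g r q.1 u.1 u.2 := fun r w =>
    (fd_assoc3 w (fun a b c => g r a b c)).symm
  rw [Finset.sum_congr rfl fun p _ => h1 p.1 p.2]
  have h2 : (∑ p ∈ antidiagonal n, ∑ q ∈ antidiagonal p.2, ∑ u ∈ antidiagonal p.1,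
      g u.1 u.2 q.1 q.2)
      = ∑ p ∈ antidiagonal n, ∑ u ∈ antidiagonal p.1,
          (fun a b z => ∑ q ∈ antidiagonal z, g a b q.1 q.2) u.1 u.2 p.2 :=
    Finset.sum_congr rfl fun p _ => Finset.sum_comm
  rw [h2, ← fd_assoc3 n (fun a b z => ∑ q ∈ antidiagonal z, g a b q.1 q.2)]

lemma sum_antidiagonal_delta {n : ℕ} (g : ℕ → M) :
    (∑ p ∈ antidiagonal n, if p.1 = 0 then g p.2 else 0) = g n := by
  rw [Finset.Nat.sum_antidiagonal_eq_sum_range_succ_mk]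
  rw [Finset.sum_eq_single 0]
  · simp
  · intro b _ hb; simp [hb]
  · intro h; exact absurd (Finset.mem_range.mpr (Nat.succ_pos n)) h

lemma fdMap_delta {E : Type*} [AddCommGroup E] (x : ℕ → E) :
    fdMap (fun d (w : E) => if d = 0 then w else 0) x = x := by
  funext n
  exact sum_antidiagonal_delta (fun j => x j)

end SumLemmas2

/-! ### Inverting a map family with invertible leading term -/

section Sinv

open Finset

variable {E : Type*} [AddCommGroup E]

def sinv (Tc : ℕ → E → E) : ℕ → E → E
  | 0 => id
  | d + 1 => fun w => -∑ j : Fin (d + 1), Tc (d + 1 - (j : ℕ)) (sinv Tc (j : ℕ) w)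
  decreasing_by exact j.isLt

variable (Tc : ℕ → E → E)

lemma sinv_zero (w : E) : sinv Tc 0 w = w := by simp [sinv]

lemma sinv_succ (d : ℕ) (w : E) :
    sinv Tc (d + 1) w = -∑ j : Fin (d + 1), Tc (d + 1 - (j : ℕ)) (sinv Tc (j : ℕ) w) := by
  rw [sinv]

lemma tc_sinv (hTc0 : ∀ w, Tc 0 w = w) :
    ∀ n w, (∑ p ∈ antidiagonal n, Tc p.1 (sinv Tc p.2 w)) = if n = 0 then w else 0 := by
  intro n w
  match n with
  | 0 => simp [Finset.Nat.antidiagonal_zero, sinv_zero, hTc0]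
  | d + 1 =>
    rw [Finset.Nat.sum_antidiagonal_eq_sum_range_succ_mk, Finset.sum_range_succ']
    have h0 : Tc 0 (sinv Tc (d + 1 - 0) w) = sinv Tc (d + 1) w := hTc0 _
    rw [h0, sinv_succ, Fin.sum_univ_eq_sum_range (fun j => Tc (d + 1 - j) (sinv Tc j w))]
    have hrefl : (∑ j ∈ range (d + 1), Tc (d + 1 - j) (sinv Tc j w))
        = ∑ i ∈ range (d + 1), Tc (i + 1) (sinv Tc (d + 1 - (i + 1)) w) := by
      rw [← Finset.sum_range_reflect]
      refine Finset.sum_congr rfl fun i hi => ?_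
      rw [Finset.mem_range] at hi
      have e1 : d + 1 - (d + 1 - 1 - i) = i + 1 := by omega
      have e2 : d + 1 - (i + 1) = d + 1 - 1 - i := by omega
      rw [e1, e2]
    rw [hrefl]
    simp

lemma sinv_add (hadd : ∀ r x y, Tc r (x + y) = Tc r x + Tc r y) :
    ∀ d (x y : E), sinv Tc d (x + y) = sinv Tc d x + sinv Tc d y := by
  intro d
  induction d using Nat.strong_induction_on with
  | _ d ih =>
    match d with
    | 0 => intro x y; simp [sinv_zero]
    | d + 1 =>
      intro x y
      rw [sinv_succ, sinv_succ, sinv_succ, ← neg_add, ← Finset.sum_add_distrib]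
      congr 1
      refine Finset.sum_congr rfl fun j _ => ?_
      rw [ih (j : ℕ) j.isLt, hadd]

lemma sinv_map_zero (hadd : ∀ r x y, Tc r (x + y) = Tc r x + Tc r y) (d : ℕ) :
    sinv Tc d 0 = 0 :=
  addhom_zero (sinv_add Tc hadd d)

lemma tc_map_zero (hadd : ∀ r x y, Tc r (x + y) = Tc r x + Tc r y) (r : ℕ) :
    Tc r 0 = 0 :=
  addhom_zero (hadd r)

lemma sinv_smul {k : Type*} [CommRing k] [Module k E]
    (hadd : ∀ r x y, Tc r (x + y) = Tc r x + Tc r y)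
    (hsmul : ∀ r (c : k) x, Tc r (c • x) = c • Tc r x) :
    ∀ d (c : k) (x : E), sinv Tc d (c • x) = c • sinv Tc d x := by
  intro d
  induction d using Nat.strong_induction_on with
  | _ d ih =>
    match d with
    | 0 => intro c x; simp [sinv_zero]
    | d + 1 =>
      intro c x
      rw [sinv_succ, sinv_succ, smul_neg, Finset.smul_sum]
      congr 1
      refine Finset.sum_congr rfl fun j _ => ?_
      rw [ih (j : ℕ) j.isLt, hsmul]

lemma sinv_tc (hTc0 : ∀ w, Tc 0 w = w)
    (hadd : ∀ r x y, Tc r (x + y) = Tc r x + Tc r y) :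
    ∀ n w, (∑ p ∈ antidiagonal n, sinv Tc p.1 (Tc p.2 w)) = if n = 0 then w else 0 := by
  have claim1 : ∀ n w, (∑ p ∈ antidiagonal n,
      Tc p.1 (∑ q ∈ antidiagonal p.2, sinv Tc q.1 (Tc q.2 w))) = Tc n w := by
    intro n w
    have h1 : ∀ p ∈ antidiagonal n,
        Tc p.1 (∑ q ∈ antidiagonal p.2, sinv Tc q.1 (Tc q.2 w))
          = ∑ q ∈ antidiagonal p.2, Tc p.1 (sinv Tc q.1 (Tc q.2 w)) := fun p _ =>
      addhom_sum (hadd p.1) _ _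
    rw [Finset.sum_congr rfl h1,
      fd_assoc3 n (fun r a b => Tc r (sinv Tc a (Tc b w)))]
    have h2 : ∀ p ∈ antidiagonal n,
        (∑ q ∈ antidiagonal p.1, Tc q.1 (sinv Tc q.2 (Tc p.2 w)))
          = if p.1 = 0 then Tc p.2 w else 0 := fun p _ => tc_sinv Tc hTc0 p.1 (Tc p.2 w)
    rw [Finset.sum_congr rfl h2, sum_antidiagonal_delta (fun j => Tc j w)]
  intro n
  induction n using Nat.strong_induction_on with
  | _ n ih =>
    match n with
    | 0 => intro w; simp [Finset.Nat.antidiagonal_zero, sinv_zero, hTc0]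
    | d + 1 =>
      intro w
      have hc := claim1 (d + 1) w
      rw [Finset.Nat.sum_antidiagonal_eq_sum_range_succ_mk, Finset.sum_range_succ,
        Finset.sum_range_succ'] at hc
      have hF0 : (∑ q ∈ antidiagonal (d + 1 - (d + 1)), sinv Tc q.1 (Tc q.2 w)) = w := by
        simp [Finset.Nat.antidiagonal_zero, sinv_zero, hTc0]
      rw [hF0] at hc
      have hmid : ∀ i ∈ range d,
          Tc (i + 1) (∑ q ∈ antidiagonal (d + 1 - (i + 1)), sinv Tc q.1 (Tc q.2 w)) = 0 := by
        intro i hi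
        rw [Finset.mem_range] at hi
        have h1 : d + 1 - (i + 1) < d + 1 := by omega
        have h2 : ¬(d + 1 - (i + 1) = 0) := by omega
        rw [ih _ h1 w, if_neg h2, tc_map_zero Tc hadd]
      rw [Finset.sum_eq_zero hmid] at hc
      have h0 : Tc 0 (∑ q ∈ antidiagonal (d + 1 - 0), sinv Tc q.1 (Tc q.2 w))
          = ∑ q ∈ antidiagonal (d + 1), sinv Tc q.1 (Tc q.2 w) := hTc0 _
      rw [h0] at hc
      rw [if_neg (Nat.succ_ne_zero d)]
      have hc' : (∑ q ∈ antidiagonal (d + 1), sinv Tc q.1 (Tc q.2 w)) + Tc (d + 1) w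
          = Tc (d + 1) w := by simpa using hc
      exact add_eq_right.mp hc'

end Sinv

/-! ### The deformed module structure -/

namespace FDSetup

open Finset

variable {k A E : Type*} [CommRing k] [Ring A] [Algebra k A]
  [AddCommGroup E] [Module k E] (S : FDSetup k A E)

/-- The coefficientwise inclusion `E[[λ]] → A^m[[λ]]`. -/
def Iser (x : ℕ → E) : Fin S.m → SerD S.D := fun i => (fun n => S.f i (x n) : ℕ → A)

/-- The coefficientwise projection `A^m[[λ]] → E[[λ]]`. -/
def Pser (v : Fin S.m → SerD S.D) : ℕ → E := fun n => ∑ i, S.ract (S.ξ i) (v i n)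

lemma Iser_add (x y : ℕ → E) : S.Iser (x + y) = S.Iser x + S.Iser y := by
  funext i n
  show S.f i (x n + y n) = S.f i (x n) + S.f i (y n)
  exact S.f_add i _ _

lemma Pser_add (v w : Fin S.m → SerD S.D) : S.Pser (v + w) = S.Pser v + S.Pser w := by
  funext n
  show (∑ i, S.ract (S.ξ i) (v i n + w i n)) = _
  simp only [S.ract_add_right, Finset.sum_add_distrib]
  rfl

lemma Pser_sub (v w : Fin S.m → SerD S.D) : S.Pser (v - w) = S.Pser v - S.Pser w :=
  map_sub (AddMonoidHom.mk' S.Pser S.Pser_add) v w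

/-- The order-`d` coefficient of the corrected inclusion. -/
def Phi (d : ℕ) (w : E) : Fin S.m → A := fun i =>
  ∑ p ∈ antidiagonal d, ∑ s, S.D.C p.1 (S.ehat i s p.2) (S.f s w)

lemma mulVec_Iser_apply (x : ℕ → E) (i : Fin S.m) (n : ℕ) :
    (S.ehat *ᵥ S.Iser x) i n = ∑ p ∈ antidiagonal n, S.Phi p.1 (x p.2) i := by
  show ((fun j => S.ehat i j) ⬝ᵥ (S.Iser x)) n = _
  rw [dotProduct, SerD.sum_apply]
  have h1 : ∀ s : Fin S.m, (S.ehat i s * S.Iser x s) n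
      = ∑ p ∈ antidiagonal n, ∑ q ∈ antidiagonal p.2,
          S.D.C p.1 (S.ehat i s q.1) (S.f s (x q.2)) := fun s => SerD.mul_apply _ _ n
  rw [Finset.sum_congr rfl fun s _ => h1 s, Finset.sum_comm]
  have h2 : ∀ p ∈ antidiagonal n,
      (∑ s, ∑ q ∈ antidiagonal p.2, S.D.C p.1 (S.ehat i s q.1) (S.f s (x q.2)))
        = ∑ q ∈ antidiagonal p.2, ∑ s, S.D.C p.1 (S.ehat i s q.1) (S.f s (x q.2)) :=
    fun p _ => Finset.sum_comm
  rw [Finset.sum_congr rfl h2,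
    fd_assoc3 n (fun r a b => ∑ s, S.D.C r (S.ehat i s a) (S.f s (x b)))]
  rfl

/-- The coefficients of the map `T = Pser ∘ (ê *ᵥ Iser ·)`. -/
def Tc (d : ℕ) (w : E) : E := ∑ i, S.ract (S.ξ i) (S.Phi d w i)

lemma Tmap_eq (x : ℕ → E) : S.Pser (S.ehat *ᵥ S.Iser x) = fdMap S.Tc x := by
  funext n
  show (∑ i, S.ract (S.ξ i) ((S.ehat *ᵥ S.Iser x) i n)) = _
  have h1 : ∀ i : Fin S.m, S.ract (S.ξ i) ((S.ehat *ᵥ S.Iser x) i n)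
      = ∑ p ∈ antidiagonal n, S.ract (S.ξ i) (S.Phi p.1 (x p.2) i) := fun i => by
    rw [S.mulVec_Iser_apply, S.ract_sum]
  rw [Finset.sum_congr rfl fun i _ => h1 i, Finset.sum_comm]
  rfl

lemma Phi_zero_eq (w : E) (i : Fin S.m) : S.Phi 0 w i = ∑ s, S.e i s * S.f s w := by
  show (∑ p ∈ antidiagonal 0, ∑ s, S.D.C p.1 (S.ehat i s p.2) (S.f s w)) = _
  rw [Finset.Nat.antidiagonal_zero, Finset.sum_singleton]
  exact Finset.sum_congr rfl fun s _ => by rw [S.ehat_coeff0, S.D.C_zero]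

lemma f_e_collapse (i : Fin S.m) (w : E) : (∑ s, S.e i s * S.f s w) = S.f i w := by
  calc (∑ s, S.e i s * S.f s w)
      = ∑ s, S.f i (S.ract (S.ξ s) (S.f s w)) := Finset.sum_congr rfl fun s _ =>
        (S.f_lin i _ _).symm
    _ = S.f i (∑ s, S.ract (S.ξ s) (S.f s w)) := (S.f_sum i _ _).symm
    _ = S.f i w := by rw [S.f_dual]

lemma Tc_zero (w : E) : S.Tc 0 w = w := by
  show (∑ i, S.ract (S.ξ i) (S.Phi 0 w i)) = w
  calc (∑ i, S.ract (S.ξ i) (S.Phi 0 w i))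
      = ∑ i, S.ract (S.ξ i) (S.f i w) := Finset.sum_congr rfl fun i _ => by
        rw [S.Phi_zero_eq, S.f_e_collapse]
    _ = w := S.f_dual w

lemma Phi_add (d : ℕ) (x y : E) (i : Fin S.m) :
    S.Phi d (x + y) i = S.Phi d x i + S.Phi d y i := by
  unfold Phi
  simp only [S.f_add, map_add, Finset.sum_add_distrib]

lemma Phi_smul (d : ℕ) (c : k) (x : E) (i : Fin S.m) :
    S.Phi d (c • x) i = c • S.Phi d x i := by
  unfold Phi
  simp only [S.f_smul, map_smul, Finset.smul_sum]

lemma Tc_add (d : ℕ) (x y : E) : S.Tc d (x + y) = S.Tc d x + S.Tc d y := by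
  unfold Tc
  simp only [S.Phi_add, S.ract_add_right, Finset.sum_add_distrib]

lemma Tc_smul (d : ℕ) (c : k) (x : E) : S.Tc d (c • x) = c • S.Tc d x := by
  unfold Tc
  simp only [S.Phi_smul, S.ract_smul_right, Finset.smul_sum]

/-- The coefficients of the deformed right action before correcting by `T⁻¹`. -/
def Wc (d : ℕ) (w : E) (b : A) : E :=
  ∑ p ∈ antidiagonal d, ∑ i, S.ract (S.ξ i) (S.D.C p.1 (S.Phi p.2 w i) b)

/-- The coefficients of the deformed right action. -/
def Ract (r : ℕ) (w : E) (b : A) : E :=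
  ∑ p ∈ antidiagonal r, sinv S.Tc p.1 (S.Wc p.2 w b)

lemma W_eq (x : ℕ → E) (a : SerD S.D) :
    S.Pser (fun i => (S.ehat *ᵥ S.Iser x) i * a) = fdConv S.Wc x a := by
  funext n
  show (∑ i, S.ract (S.ξ i) (((S.ehat *ᵥ S.Iser x) i * a) n)) = _
  have h1 : ∀ i : Fin S.m, S.ract (S.ξ i) (((S.ehat *ᵥ S.Iser x) i * a) n)
      = ∑ p ∈ antidiagonal n, ∑ q ∈ antidiagonal p.2, ∑ u ∈ antidiagonal q.1,
          S.ract (S.ξ i) (S.D.C p.1 (S.Phi u.1 (x u.2) i) (a q.2)) := by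
    intro i
    rw [SerD.mul_apply, S.ract_sum]
    refine Finset.sum_congr rfl fun p _ => ?_
    rw [S.ract_sum]
    refine Finset.sum_congr rfl fun q _ => ?_
    rw [S.mulVec_Iser_apply]
    rw [addhom_sum (φ := fun b => S.D.C p.1 b (a q.2))
      (fun u v => by show S.D.C p.1 (u + v) (a q.2) = _; rw [map_add, LinearMap.add_apply])
      (antidiagonal q.1)
      (fun u => S.Phi u.1 (x u.2) i)]
    exact addhom_sum (S.ract_add_right (S.ξ i)) _ _
  rw [Finset.sum_congr rfl fun i (_ : i ∈ Finset.univ) => h1 i, Finset.sum_comm]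
  have h2 : ∀ p ∈ antidiagonal n,
      (∑ i, ∑ q ∈ antidiagonal p.2, ∑ u ∈ antidiagonal q.1,
        S.ract (S.ξ i) (S.D.C p.1 (S.Phi u.1 (x u.2) i) (a q.2)))
      = ∑ q ∈ antidiagonal p.2, ∑ u ∈ antidiagonal q.1, ∑ i,
          S.ract (S.ξ i) (S.D.C p.1 (S.Phi u.1 (x u.2) i) (a q.2)) := by
    intro p _
    rw [Finset.sum_comm]
    exact Finset.sum_congr rfl fun q _ => Finset.sum_comm
  rw [Finset.sum_congr rfl h2,
    fd_sum4 n (fun r b1 b2 c => ∑ i, S.ract (S.ξ i) (S.D.C r (S.Phi b1 (x b2) i) (a c)))]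
  rfl

end FDSetup

namespace SerD

variable {k A : Type*} [CommRing k] [Ring A] [Algebra k A] {D : FormalDeformation k A}

lemma one_def : (1 : SerD D) = fdOne A := rfl

end SerD

namespace FDSetup

open Finset

variable {k A E : Type*} [CommRing k] [Ring A] [Algebra k A]
  [AddCommGroup E] [Module k E] (S : FDSetup k A E)

lemma Ract_eq (x : ℕ → E) (a : ℕ → A) :
    fdConv S.Ract x a = fdMap (sinv S.Tc) (fdConv S.Wc x a) :=
  (fdMap_fdConv (sinv S.Tc) S.Wc (sinv_add S.Tc S.Tc_add) x a).symm

lemma Tinv_T (x : ℕ → E) : fdMap (sinv S.Tc) (fdMap S.Tc x) = x := by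
  rw [fdMap_fdMap (sinv S.Tc) S.Tc (sinv_add S.Tc S.Tc_add) x]
  have h : (fun d (w : E) => ∑ p ∈ antidiagonal d, sinv S.Tc p.1 (S.Tc p.2 w))
      = fun d w => if d = 0 then w else 0 := by
    funext d w
    exact sinv_tc S.Tc S.Tc_zero S.Tc_add d w
  rw [h, fdMap_delta]

lemma T_Tinv (y : ℕ → E) : fdMap S.Tc (fdMap (sinv S.Tc) y) = y := by
  rw [fdMap_fdMap S.Tc (sinv S.Tc) S.Tc_add y]
  have h : (fun d (w : E) => ∑ p ∈ antidiagonal d, S.Tc p.1 (sinv S.Tc p.2 w))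
      = fun d w => if d = 0 then w else 0 := by
    funext d w
    exact tc_sinv S.Tc S.Tc_zero d w
  rw [h, fdMap_delta]

lemma ehat_mulVec_vmul (v : Fin S.m → SerD S.D) (a : SerD S.D) :
    S.ehat *ᵥ (fun i => v i * a) = fun i => (S.ehat *ᵥ v) i * a := by
  funext i
  show ((fun j => S.ehat i j) ⬝ᵥ fun j => v j * a) = ((fun j => S.ehat i j) ⬝ᵥ v) * a
  rw [dotProduct, dotProduct, Finset.sum_mul]
  exact Finset.sum_congr rfl fun j _ => (mul_assoc _ _ _).symm

lemma pser_inj (u : Fin S.m → SerD S.D) (hu : S.ehat *ᵥ u = u) (h0 : S.Pser u = 0) :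
    u = 0 := by
  have key : ∀ n i, u i n = 0 := by
    intro n
    induction n using Nat.strong_induction_on with
    | _ n ih =>
      have hE : ∀ i, (∑ j, S.e i j * u j n) = 0 := by
        intro i
        have h00 : (∑ j, S.ract (S.ξ j) (u j n)) = 0 := congrFun h0 n
        calc (∑ j, S.e i j * u j n)
            = ∑ j, S.f i (S.ract (S.ξ j) (u j n)) :=
              Finset.sum_congr rfl fun j _ => (S.f_lin i _ _).symm
          _ = S.f i (∑ j, S.ract (S.ξ j) (u j n)) := (S.f_sum i _ _).symm
          _ = 0 := by rw [h00, S.f_zero]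
      intro i
      have hui : (S.ehat *ᵥ u) i n = u i n := by rw [hu]
      rw [← hui]
      show ((fun j => S.ehat i j) ⬝ᵥ u) n = 0
      rw [dotProduct, SerD.sum_apply]
      have h1 : ∀ s ∈ (Finset.univ : Finset (Fin S.m)), (S.ehat i s * u s) n
          = ∑ p ∈ antidiagonal n, ∑ q ∈ antidiagonal p.2,
              S.D.C p.1 (S.ehat i s q.1) (u s q.2) := fun s _ => SerD.mul_apply _ _ n
      rw [Finset.sum_congr rfl h1, Finset.sum_comm]
      refine Finset.sum_eq_zero fun p hp => ?_
      rw [Finset.sum_comm]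
      refine Finset.sum_eq_zero fun q hq => ?_
      rw [Finset.HasAntidiagonal.mem_antidiagonal] at hp hq
      rcases lt_or_ge q.2 n with hlt | hge
      · exact Finset.sum_eq_zero fun s _ => by rw [ih q.2 hlt s]; simp
      · have hq2 : q.2 = n := by omega
        have hp1 : p.1 = 0 := by omega
        have hq1 : q.1 = 0 := by omega
        rw [hp1, hq1, hq2]
        calc (∑ s, S.D.C 0 (S.ehat i s 0) (u s n))
            = ∑ s, S.e i s * u s n := Finset.sum_congr rfl fun s _ => by
              rw [S.ehat_coeff0, S.D.C_zero]
          _ = 0 := hE i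
  funext i n
  exact key n i

lemma proj_eq (w : Fin S.m → SerD S.D) (hw : S.ehat *ᵥ w = w) :
    S.ehat *ᵥ S.Iser (fdMap (sinv S.Tc) (S.Pser w)) = w := by
  set x := fdMap (sinv S.Tc) (S.Pser w) with hx
  have h1 : S.ehat *ᵥ (S.ehat *ᵥ S.Iser x) = S.ehat *ᵥ S.Iser x := by
    rw [Matrix.mulVec_mulVec, S.ehat_idem]
  have hu : S.ehat *ᵥ (S.ehat *ᵥ S.Iser x - w) = S.ehat *ᵥ S.Iser x - w := by
    rw [Matrix.mulVec_sub, h1, hw]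
  have h0 : S.Pser (S.ehat *ᵥ S.Iser x - w) = 0 := by
    rw [S.Pser_sub, S.Tmap_eq, hx, T_Tinv, sub_self]
  exact sub_eq_zero.mp (S.pser_inj _ hu h0)

lemma act_eq (x : ℕ → E) (a : SerD S.D) :
    fdConv S.Ract x a
      = fdMap (sinv S.Tc) (S.Pser (fun i => (S.ehat *ᵥ S.Iser x) i * a)) := by
  exact (S.Ract_eq x a).trans (congrArg (fdMap (sinv S.Tc)) (S.W_eq x a).symm)

lemma Ract_zero_coeff (w : E) (b : A) : S.Ract 0 w b = S.ract w b := by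
  unfold Ract
  rw [Finset.Nat.antidiagonal_zero, Finset.sum_singleton, sinv_zero]
  unfold Wc
  rw [Finset.Nat.antidiagonal_zero, Finset.sum_singleton]
  calc (∑ i, S.ract (S.ξ i) (S.D.C 0 (S.Phi 0 w i) b))
      = ∑ i, S.ract (S.ract (S.ξ i) (S.f i w)) b := Finset.sum_congr rfl fun i _ => by
        rw [S.Phi_zero_eq, S.f_e_collapse, S.D.C_zero, ← S.ract_mul]
    _ = S.ract (∑ i, S.ract (S.ξ i) (S.f i w)) b := (S.ract_sum_left b _ _).symm
    _ = S.ract w b := by rw [S.f_dual]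

lemma Wc_add_left (d : ℕ) (x y : E) (b : A) :
    S.Wc d (x + y) b = S.Wc d x b + S.Wc d y b := by
  unfold Wc
  simp only [S.Phi_add, map_add, LinearMap.add_apply, S.ract_add_right,
    Finset.sum_add_distrib]

lemma Wc_add_right (d : ℕ) (x : E) (b c : A) :
    S.Wc d x (b + c) = S.Wc d x b + S.Wc d x c := by
  unfold Wc
  simp only [map_add, S.ract_add_right, Finset.sum_add_distrib]

lemma Wc_smul_left (d : ℕ) (c : k) (x : E) (b : A) :
    S.Wc d (c • x) b = c • S.Wc d x b := by
  unfold Wc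
  simp only [S.Phi_smul, map_smul, LinearMap.smul_apply, S.ract_smul_right,
    Finset.smul_sum]

lemma Wc_smul_right (d : ℕ) (c : k) (x : E) (b : A) :
    S.Wc d x (c • b) = c • S.Wc d x b := by
  unfold Wc
  simp only [map_smul, S.ract_smul_right, Finset.smul_sum]

lemma Ract_add_left (r : ℕ) (x y : E) (b : A) :
    S.Ract r (x + y) b = S.Ract r x b + S.Ract r y b := by
  unfold Ract
  simp only [S.Wc_add_left, sinv_add S.Tc S.Tc_add, Finset.sum_add_distrib]

lemma Ract_add_right (r : ℕ) (x : E) (b c : A) :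
    S.Ract r x (b + c) = S.Ract r x b + S.Ract r x c := by
  unfold Ract
  simp only [S.Wc_add_right, sinv_add S.Tc S.Tc_add, Finset.sum_add_distrib]

lemma Ract_smul_left (r : ℕ) (c : k) (x : E) (b : A) :
    S.Ract r (c • x) b = c • S.Ract r x b := by
  unfold Ract
  simp only [S.Wc_smul_left, sinv_smul S.Tc S.Tc_add S.Tc_smul, Finset.smul_sum]

lemma Ract_smul_right (r : ℕ) (c : k) (x : E) (b : A) :
    S.Ract r x (c • b) = c • S.Ract r x b := by
  unfold Ract
  simp only [S.Wc_smul_right, sinv_smul S.Tc S.Tc_add S.Tc_smul, Finset.smul_sum]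

lemma Ract_one (x : ℕ → E) : fdConv S.Ract x (fdOne A) = x := by
  have h1 : fdConv S.Ract x (fdOne A) = fdConv S.Ract x (1 : SerD S.D) := rfl
  rw [h1, S.act_eq x (1 : SerD S.D)]
  have h2 : (fun i => (S.ehat *ᵥ S.Iser x) i * (1 : SerD S.D)) = S.ehat *ᵥ S.Iser x := by
    funext i; exact mul_one _
  rw [h2, S.Tmap_eq, S.Tinv_T]

lemma mulVec_invariant (x : ℕ → E) : S.ehat *ᵥ (S.ehat *ᵥ S.Iser x) = S.ehat *ᵥ S.Iser x := by
  rw [Matrix.mulVec_mulVec, S.ehat_idem]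

lemma Ract_assoc (x : ℕ → E) (a b : SerD S.D) :
    fdConv S.Ract (fdConv S.Ract x a) b = fdConv S.Ract x (S.D.mul a b) := by
  have ha : S.D.mul a b = a * b := (SerD.mul_def a b).symm
  rw [ha, S.act_eq x (a * b), S.act_eq (fdConv S.Ract x a) b]
  set v := S.ehat *ᵥ S.Iser x with hv
  have hw : S.ehat *ᵥ (fun i => v i * a) = fun i => v i * a := by
    rw [S.ehat_mulVec_vmul, hv, S.mulVec_invariant]
  have hproj : S.ehat *ᵥ S.Iser (fdConv S.Ract x a) = fun i => v i * a := by
    rw [S.act_eq x a]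
    exact S.proj_eq _ hw
  rw [hproj]
  have h2 : (fun i => (fun i => v i * a) i * b) = fun i => v i * (a * b) := by
    funext i
    exact mul_assoc _ _ _
  rw [h2]

/-- Dual basis elements over the deformed algebra. -/
def xi' (i : Fin S.m) : ℕ → E := fdMap (sinv S.Tc) (S.Pser (fun j => S.ehat j i))

/-- Dual basis coefficient functionals over the deformed algebra. -/
def gdual (i : Fin S.m) (x : ℕ → E) : SerD S.D := (S.ehat *ᵥ S.Iser x) i

lemma gdual_add (i : Fin S.m) (x y : ℕ → E) :
    S.gdual i (x + y) = S.gdual i x + S.gdual i y := by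
  unfold gdual
  rw [S.Iser_add, Matrix.mulVec_add]
  rfl

lemma gdual_mul (i : Fin S.m) (x : ℕ → E) (a : SerD S.D) :
    S.gdual i (fdConv S.Ract x a) = S.D.mul (S.gdual i x) a := by
  set v := S.ehat *ᵥ S.Iser x with hv
  have hw : S.ehat *ᵥ (fun j => v j * a) = fun j => v j * a := by
    rw [S.ehat_mulVec_vmul, hv, S.mulVec_invariant]
  have hproj : S.ehat *ᵥ S.Iser (fdConv S.Ract x a) = fun j => v j * a := by
    rw [S.act_eq x a]
    exact S.proj_eq _ hw
  show (S.ehat *ᵥ S.Iser (fdConv S.Ract x a)) i = _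
  rw [hproj]
  exact (SerD.mul_def _ _)

lemma ehat_col_invariant (i : Fin S.m) :
    S.ehat *ᵥ (fun j => S.ehat j i) = fun j => S.ehat j i := by
  funext j
  show ((fun s => S.ehat j s) ⬝ᵥ fun s => S.ehat s i) = S.ehat j i
  rw [dotProduct, ← Matrix.mul_apply, S.ehat_idem]

lemma gdual_dual (x : ℕ → E) :
    (∑ i, fdConv S.Ract (S.xi' i) (S.gdual i x)) = x := by
  have hterm : ∀ i : Fin S.m, fdConv S.Ract (S.xi' i) (S.gdual i x)
      = fdMap (sinv S.Tc) (S.Pser (fun j => S.ehat j i * S.gdual i x)) := by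
    intro i
    rw [S.act_eq (S.xi' i) (S.gdual i x)]
    have hproj : S.ehat *ᵥ S.Iser (S.xi' i) = fun j => S.ehat j i :=
      S.proj_eq _ (S.ehat_col_invariant i)
    rw [show S.xi' i = fdMap (sinv S.Tc) (S.Pser (fun j => S.ehat j i)) from rfl] at hproj ⊢
    rw [hproj]
  rw [Finset.sum_congr rfl fun i (_ : i ∈ Finset.univ) => hterm i]
  have hΘadd : ∀ v w : Fin S.m → SerD S.D,
      fdMap (sinv S.Tc) (S.Pser (v + w))
        = fdMap (sinv S.Tc) (S.Pser v) + fdMap (sinv S.Tc) (S.Pser w) := by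
    intro v w
    rw [S.Pser_add, fdMap_add (sinv S.Tc) (sinv_add S.Tc S.Tc_add)]
  have hsum := (addhom_sum (φ := fun v : Fin S.m → SerD S.D => fdMap (sinv S.Tc) (S.Pser v))
    hΘadd Finset.univ (fun i => fun j => S.ehat j i * S.gdual i x)).symm
  rw [hsum]
  have hinner : (∑ i, fun j => S.ehat j i * S.gdual i x) = S.ehat *ᵥ S.Iser x := by
    funext j
    rw [Finset.sum_apply]
    show (∑ i, S.ehat j i * (S.ehat *ᵥ S.Iser x) i) = _
    have h3 : (∑ i, S.ehat j i * (S.ehat *ᵥ S.Iser x) i)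
        = (S.ehat *ᵥ (S.ehat *ᵥ S.Iser x)) j := rfl
    rw [h3, S.mulVec_invariant]
  rw [hinner, S.Tmap_eq, S.Tinv_T]

end FDSetup

/-- Proposition 2.7, existence part. Every finitely generated
projective right `A`-module `E` (given via a dual basis) admits a deformation
corresponding to `qA`, which is finitely generated and projective over `qA`
(expressed by a dual basis over `qA`). -/
theorem fgp_module_deformation_exists {k A E : Type*} [CommRing k] [Ring A]
    [Algebra k A] [AddCommGroup E] [Module k E]
    (D : FormalDeformation k A)
    -- the right A-module structure on E
    (ract : E → A → E)
    (ract_add_left : ∀ x y a, ract (x + y) a = ract x a + ract y a)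
    (ract_add_right : ∀ x a b, ract x (a + b) = ract x a + ract x b)
    (ract_smul_left : ∀ (c : k) x a, ract (c • x) a = c • ract x a)
    (ract_smul_right : ∀ (c : k) x a, ract x (c • a) = c • ract x a)
    (ract_one : ∀ x, ract x 1 = x)
    (ract_mul : ∀ x a b, ract x (a * b) = ract (ract x a) b)
    -- E is finitely generated projective: a finite dual basis
    (m : ℕ) (ξ : Fin m → E) (f : Fin m → E → A)
    (f_add : ∀ i x y, f i (x + y) = f i x + f i y)
    (f_lin : ∀ i x a, f i (ract x a) = f i x * a)
    (f_dual : ∀ x, ∑ i, ract (ξ i) (f i x) = x) :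
    ∃ R : ℕ → E → A → E,
      -- R deforms the original action by k-bilinear cochains
      (∀ x a, R 0 x a = ract x a) ∧
      (∀ r x y a, R r (x + y) a = R r x a + R r y a) ∧
      (∀ r x a b, R r x (a + b) = R r x a + R r x b) ∧
      (∀ r (c : k) x a, R r (c • x) a = c • R r x a) ∧
      (∀ r (c : k) x a, R r x (c • a) = c • R r x a) ∧
      -- (E[[λ]], •) is a unital right qA-module
      (∀ x : ℕ → E, fdConv R x (fdOne A) = x) ∧
      (∀ (x : ℕ → E) (a b : ℕ → A),
        fdConv R (fdConv R x a) b = fdConv R x (D.mul a b)) ∧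
      -- (E[[λ]], •) is finitely generated projective over qA: a dual basis over qA
      (∃ (m' : ℕ) (ξ' : Fin m' → ℕ → E) (g : Fin m' → (ℕ → E) → ℕ → A),
        (∀ i x y, g i (x + y) = g i x + g i y) ∧
        (∀ i (x : ℕ → E) (a : ℕ → A), g i (fdConv R x a) = D.mul (g i x) a) ∧
        (∀ x : ℕ → E, ∑ i, fdConv R (ξ' i) (g i x) = x)) := by
  let S : FDSetup k A E := ⟨D, ract, ract_add_left, ract_add_right, ract_smul_left,
    ract_smul_right, ract_one, ract_mul, m, ξ, f, f_add, f_lin, f_dual⟩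
  refine ⟨S.Ract, ?_, ?_, ?_, ?_, ?_, ?_, ?_, ?_⟩
  · exact fun x a => S.Ract_zero_coeff x a
  · exact fun r x y a => S.Ract_add_left r x y a
  · exact fun r x a b => S.Ract_add_right r x a b
  · exact fun r c x a => S.Ract_smul_left r c x a
  · exact fun r c x a => S.Ract_smul_right r c x a
  · exact fun x => S.Ract_one x
  · exact fun x a b => S.Ract_assoc x a b
  · exact ⟨S.m, S.xi', fun i x => S.gdual i x, fun i x y => S.gdual_add i x y,
      fun i x a => S.gdual_mul i x a, fun x => S.gdual_dual x⟩
end
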